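/- Let n, d, β be natural numbers with 1 ≤ β and 2·d·β² < n. Let A₂ be the DPSR-I algorithm that, given a d-subset e of the ground set V of size n, outputs e ∪ B where B is a subset of V of size β chosen uniformly at random among all β-subsets of V. Then A₂ is an (ε1,ε2,δ,β)-differentially private subset-retrieval algorithm with ε1 = 0, ε2 = 0, and δ = 1 − (β−1)/(n−d), where n, d, β are interpreted as real numbers. -/

import Mathlib

open scoped ENNReal

/-- Distance between two finite sets: `d(e,f) = max(|e \ f|, |f \ e|)`. -/
def setDist {γ : Type*} [DecidableEq γ] (e f : Finset γ) : ℕ :=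
  max (e \ f).card (f \ e).card

/-- Probability that a sample from the PMF `μ` lands in the set `S`. -/
noncomputable def pr {γ : Type*} (μ : PMF γ) (S : Set γ) : ℝ :=
  (μ.toOuterMeasure S).toReal

/-- `A` is an `(ε1, ε2, δ, β)_{n,d}` differentially-private solution to the
subset-retrieval problem. -/
def IsDP (n d β : ℕ) (ε1 ε2 δ : ℝ)
    (A : Finset (Fin n) → PMF (Finset (Fin n))) : Prop :=
  (∀ e : Finset (Fin n), e.card = d →
      pr (A e) {s | setDist s e ≤ β} ≥ 1 - ε1) ∧
  (∀ ei ej : Finset (Fin n), ei.card = d → ej.card = d → setDist ei ej = 1 →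
      ∀ S : Set (Finset (Fin n)),
        pr (A ei) S ≤ Real.exp ε2 * pr (A ej) S + δ)

theorem stmt_6 (n d β : ℕ) (hβ1 : 1 ≤ β) (hn : 2 * d * β ^ 2 < n)
    (μ : PMF (Finset (Fin n)))
    (hμ : ∀ B : Finset (Fin n),
      μ B = if B.card = β then ((n.choose β : ℝ≥0∞))⁻¹ else 0)
    (A : Finset (Fin n) → PMF (Finset (Fin n)))
    (hA : ∀ e : Finset (Fin n), e.card = d → A e = μ.map (fun B => e ∪ B)) :
    IsDP n d β 0 0 (1 - ((β : ℝ) - 1) / ((n : ℝ) - d)) A := by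

  classical
  have hn0 : 0 < n := Nat.lt_of_le_of_lt (Nat.zero_le _) hn
  have hβn : β ≤ n := by
    obtain ⟨B0, hB0⟩ := μ.support_nonempty
    have h := hμ B0
    by_cases hc : B0.card = β
    · calc β = B0.card := hc.symm
        _ ≤ Finset.univ.card := Finset.card_le_univ B0
        _ = n := by simp
    · simp only [hc, if_false] at h
      exact absurd h hB0
  have hC0 : 0 < n.choose β := Nat.choose_pos hβn
  have hCR : (0:ℝ) < (n.choose β : ℝ) := by exact_mod_cast hC0
  have key : ∀ (e : Finset (Fin n)) (S : Set (Finset (Fin n))),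
      pr (μ.map (fun B => e ∪ B)) S
        = ((Finset.univ.filter
            (fun B : Finset (Fin n) => B.card = β ∧ (e ∪ B) ∈ S)).card : ℝ)
          / (n.choose β : ℝ) := by
    intro e S
    unfold pr
    rw [PMF.toOuterMeasure_map_apply, PMF.toOuterMeasure_apply, tsum_fintype]
    have hind : ∀ B : Finset (Fin n),
        Set.indicator ((fun B => e ∪ B) ⁻¹' S) (⇑μ) B
          = if B.card = β ∧ (e ∪ B) ∈ S then ((n.choose β : ℝ≥0∞))⁻¹ else 0 := by
      intro B
      rw [Set.indicator_apply]
      by_cases h1 : (e ∪ B) ∈ S <;> by_cases h2 : B.card = β <;>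
        simp [h1, h2, hμ B, Set.mem_preimage]
    rw [Finset.sum_congr rfl (fun B _ => hind B), ← Finset.sum_filter,
      Finset.sum_const, nsmul_eq_mul]
    rw [ENNReal.toReal_mul, ENNReal.toReal_inv]
    simp [div_eq_mul_inv]
  have hcount : (Finset.univ.filter
      (fun B : Finset (Fin n) => B.card = β)).card = n.choose β := by
    rw [← Finset.powerset_univ, ← Finset.powersetCard_eq_filter,
      Finset.card_powersetCard, Finset.card_univ, Fintype.card_fin]
  constructor
  · -- accuracy
    intro e he
    rw [hA e he, key]
    rw [ge_iff_le, sub_zero, le_div_iff₀ hCR, one_mul, ← hcount]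
    refine Nat.cast_le.mpr (Finset.card_le_card ?_)
    intro B hB
    have hpf : True := trivial
    simp only [Finset.mem_filter, Finset.mem_univ, true_and, Set.mem_setOf_eq] at hB ⊢
    refine ⟨hB, ?_⟩
    have h1 : (e ∪ B) \ e = B \ e := by
      ext a; simp [Finset.mem_sdiff, Finset.mem_union]; tauto
    have h2 : e \ (e ∪ B) = ∅ := by
      rw [Finset.sdiff_eq_empty_iff_subset]; exact Finset.subset_union_left
    have h3 : (B \ e).card ≤ β := by
      rw [← hB]; exact Finset.card_le_card (Finset.sdiff_subset)
    simp [setDist, h1, h2, h3]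
  · -- privacy
    intro ei ej hi hj hdist S
    rw [hA ei hi, hA ej hj, key, key, Real.exp_zero, one_mul]
    -- extract x and y
    have hcards : (ei \ ej).card = (ej \ ei).card := by
      have a := Finset.card_sdiff_add_card_inter ei ej
      have b := Finset.card_sdiff_add_card_inter ej ei
      rw [Finset.inter_comm] at b
      omega
    have hone : (ei \ ej).card = 1 ∧ (ej \ ei).card = 1 := by
      unfold setDist at hdist
      omega
    obtain ⟨x, hx⟩ := Finset.card_eq_one.mp hone.1
    obtain ⟨y, hy⟩ := Finset.card_eq_one.mp hone.2
    have hxi : x ∈ ei := by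
      have : x ∈ ei \ ej := hx ▸ Finset.mem_singleton_self x
      exact (Finset.mem_sdiff.mp this).1
    have hxj : x ∉ ej := by
      have : x ∈ ei \ ej := hx ▸ Finset.mem_singleton_self x
      exact (Finset.mem_sdiff.mp this).2
    have hyj : y ∈ ej := by
      have : y ∈ ej \ ei := hy ▸ Finset.mem_singleton_self y
      exact (Finset.mem_sdiff.mp this).1
    have hyi : y ∉ ei := by
      have : y ∈ ej \ ei := hy ▸ Finset.mem_singleton_self y
      exact (Finset.mem_sdiff.mp this).2
    have hxy : x ≠ y := fun h => hyi (h ▸ hxi)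
    have hmemx : ∀ a, a ∈ ei → a ∉ ej → a = x := by
      intro a h1 h2
      have : a ∈ ei \ ej := Finset.mem_sdiff.mpr ⟨h1, h2⟩
      rw [hx, Finset.mem_singleton] at this; exact this
    have hmemy : ∀ a, a ∈ ej → a ∉ ei → a = y := by
      intro a h1 h2
      have : a ∈ ej \ ei := Finset.mem_sdiff.mpr ⟨h1, h2⟩
      rw [hy, Finset.mem_singleton] at this; exact this
    have hd1 : 1 ≤ d := by
      rw [← hi]
      exact Finset.card_pos.mpr ⟨x, hxi⟩
    have hbdn : β * d < n := by
      have h1 : β * d ≤ 2 * d * β ^ 2 := by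
        calc β * d ≤ (2 * β) * (β * d) := Nat.le_mul_of_pos_left _ (by omega)
          _ = 2 * d * β ^ 2 := by ring
      omega
    have hdn : d < n := by
      have h1 : d ≤ β * d := Nat.le_mul_of_pos_left _ (by omega)
      omega
    -- union lemmas
    have hcup : ∀ B : Finset (Fin n), x ∈ B → y ∈ B → ej ∪ B = ei ∪ B := by
      intro B hxB hyB
      ext a
      simp only [Finset.mem_union]
      constructor
      · rintro (h | h)
        · by_cases h2 : a ∈ ei
          · exact Or.inl h2
          · exact Or.inr ((hmemy a h h2) ▸ hyB)
        · exact Or.inr h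
      · rintro (h | h)
        · by_cases h2 : a ∈ ej
          · exact Or.inl h2
          · exact Or.inr ((hmemx a h h2) ▸ hxB)
        · exact Or.inr h
    have hcup2 : ∀ B : Finset (Fin n), x ∉ B → y ∈ B →
        ej ∪ (insert x (B.erase y)) = ei ∪ B := by
      intro B hxB hyB
      ext a
      simp only [Finset.mem_union, Finset.mem_insert, Finset.mem_erase]
      constructor
      · rintro (h | h | ⟨h1, h2⟩)
        · by_cases h2 : a ∈ ei
          · exact Or.inl h2
          · exact Or.inr ((hmemy a h h2) ▸ hyB)
        · exact Or.inl (h ▸ hxi)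
        · exact Or.inr h2
      · rintro (h | h)
        · by_cases h2 : a ∈ ej
          · exact Or.inl h2
          · exact Or.inr (Or.inl (hmemx a h h2))
        · by_cases h2 : a = y
          · exact Or.inl (h2 ▸ hyj)
          · exact Or.inr (Or.inr ⟨h2, h⟩)
    -- the counting sets
    set Ni := Finset.univ.filter
      (fun B : Finset (Fin n) => B.card = β ∧ (ei ∪ B) ∈ S) with hNi
    set Nj := Finset.univ.filter
      (fun B : Finset (Fin n) => B.card = β ∧ (ej ∪ B) ∈ S) with hNj
    set Fy := Finset.univ.filter
      (fun B : Finset (Fin n) => B.card = β ∧ (ei ∪ B) ∈ S ∧ y ∈ B) with hFy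
    set Fno := Finset.univ.filter
      (fun B : Finset (Fin n) => B.card = β ∧ y ∉ B) with hFno
    set Fyall := Finset.univ.filter
      (fun B : Finset (Fin n) => B.card = β ∧ y ∈ B) with hFyall
    -- step A : Ni ⊆ Fy ∪ Fno
    have stepA : Ni.card ≤ Fy.card + Fno.card := by
      have hsub : Ni ⊆ Fy ∪ Fno := by
        intro B hB
        simp only [hNi, Finset.mem_filter, Finset.mem_univ, true_and] at hB
        by_cases hyB : y ∈ B
        · exact Finset.mem_union_left _ (by
            simp only [hFy, Finset.mem_filter, Finset.mem_univ, true_and]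
            exact ⟨hB.1, hB.2, hyB⟩)
        · exact Finset.mem_union_right _ (by
            simp only [hFno, Finset.mem_filter, Finset.mem_univ, true_and]
            exact ⟨hB.1, hyB⟩)
      calc Ni.card ≤ (Fy ∪ Fno).card := Finset.card_le_card hsub
        _ ≤ Fy.card + Fno.card := Finset.card_union_le _ _
    -- step B : injection Fy → Nj
    have stepB : Fy.card ≤ Nj.card := by
      apply Finset.card_le_card_of_injOn
        (fun B => if x ∈ B then B else insert x (B.erase y))
      · intro B hB
        simp only [hFy, Finset.mem_coe, Finset.mem_filter, Finset.mem_univ, true_and] at hB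
        obtain ⟨hcard, hS, hyB⟩ := hB
        simp only [hNj, Finset.mem_coe, Finset.mem_filter, Finset.mem_univ, true_and]
        by_cases hxB : x ∈ B
        · rw [if_pos hxB]
          exact ⟨hcard, (hcup B hxB hyB) ▸ hS⟩
        · rw [if_neg hxB]
          refine ⟨?_, (hcup2 B hxB hyB) ▸ hS⟩
          rw [Finset.card_insert_of_notMem (fun h => hxB (Finset.mem_of_mem_erase h)),
            Finset.card_erase_of_mem hyB, hcard]
          omega
      · intro B1 hB1 B2 hB2 heq
        simp only [Finset.coe_filter, Set.mem_setOf_eq, hFy, Finset.mem_filter] at hB1 hB2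
        have hy1 : y ∈ B1 := hB1.2.2.2
        have hy2 : y ∈ B2 := hB2.2.2.2
        simp only at heq
        by_cases h1 : x ∈ B1 <;> by_cases h2 : x ∈ B2
        · rwa [if_pos h1, if_pos h2] at heq
        · rw [if_pos h1, if_neg h2] at heq
          exfalso
          have : y ∈ insert x (B2.erase y) := heq ▸ hy1
          simp only [Finset.mem_insert, Finset.mem_erase] at this
          rcases this with h | ⟨h, _⟩
          · exact hxy h.symm
          · exact h rfl
        · rw [if_neg h1, if_pos h2] at heq
          exfalso
          have : y ∈ insert x (B1.erase y) := heq ▸ hy2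
          simp only [Finset.mem_insert, Finset.mem_erase] at this
          rcases this with h | ⟨h, _⟩
          · exact hxy h.symm
          · exact h rfl
        · rw [if_neg h1, if_neg h2] at heq
          have hx1 : x ∉ B1.erase y := fun h => h1 (Finset.mem_of_mem_erase h)
          have hx2 : x ∉ B2.erase y := fun h => h2 (Finset.mem_of_mem_erase h)
          have herase : B1.erase y = B2.erase y := by
            have := congrArg (fun s => Finset.erase s x) heq
            simpa [Finset.erase_insert hx1, Finset.erase_insert hx2] using this
          calc B1 = insert y (B1.erase y) := (Finset.insert_erase hy1).symm
            _ = insert y (B2.erase y) := by rw [herase]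
            _ = B2 := Finset.insert_erase hy2
    -- count Fyall
    have hM : Fyall.card = (n-1).choose (β-1) := by
      have hcardE : (Finset.univ.erase y).card = n - 1 := by
        rw [Finset.card_erase_of_mem (Finset.mem_univ y), Finset.card_univ,
          Fintype.card_fin]
      rw [← hcardE, ← Finset.card_powersetCard]
      refine Finset.card_bij' (fun B _ => B.erase y) (fun A _ => insert y A)
        ?_ ?_ ?_ ?_
      · intro B hB
        simp only [hFyall, Finset.mem_filter, Finset.mem_univ, true_and] at hB
        rw [Finset.mem_powersetCard]
        exact ⟨Finset.erase_subset_erase y (Finset.subset_univ B),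
          by rw [Finset.card_erase_of_mem hB.2, hB.1]⟩
      · intro A hA2
        rw [Finset.mem_powersetCard] at hA2
        have hyA : y ∉ A := fun h => by
          have := hA2.1 h
          simp at this
        simp only [hFyall, Finset.mem_filter, Finset.mem_univ, true_and]
        refine ⟨?_, Finset.mem_insert_self y A⟩
        rw [Finset.card_insert_of_notMem hyA, hA2.2]
        omega
      · intro B hB
        simp only [hFyall, Finset.mem_filter, Finset.mem_univ, true_and] at hB
        exact Finset.insert_erase hB.2
      · intro A hA2
        rw [Finset.mem_powersetCard] at hA2
        have hyA : y ∉ A := fun h => by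
          have := hA2.1 h
          simp at this
        exact Finset.erase_insert hyA
    have hpart : Fno.card + Fyall.card = n.choose β := by
      have hdisj : Disjoint Fno Fyall := by
        rw [Finset.disjoint_left]
        intro B h1 h2
        simp only [hFno, hFyall, Finset.mem_filter, Finset.mem_univ, true_and] at h1 h2
        exact h1.2 h2.2
      have hunion : Fno ∪ Fyall
          = Finset.univ.filter (fun B : Finset (Fin n) => B.card = β) := by
        ext B
        simp only [hFno, hFyall, Finset.mem_union, Finset.mem_filter,
          Finset.mem_univ, true_and]
        tauto
      rw [← hcount, ← hunion, Finset.card_union_of_disjoint hdisj]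
    -- combinatorial identity
    have hident : n * ((n-1).choose (β-1)) = n.choose β * β := by
      have hkey := Nat.add_one_mul_choose_eq (n-1) (β-1)
      have e1 : n - 1 + 1 = n := by omega
      have e2 : β - 1 + 1 = β := by omega
      rw [e1, e2] at hkey
      exact hkey
    -- final arithmetic
    set M := (n-1).choose (β-1) with hMdef
    have hMle : M ≤ n.choose β := by
      apply Nat.le_of_mul_le_mul_left _ hn0
      calc n * M = n.choose β * β := hident
        _ ≤ n.choose β * n := Nat.mul_le_mul_left _ hβn
        _ = n * n.choose β := Nat.mul_comm _ _
    have hnat : Ni.card ≤ Nj.card + (n.choose β - M) := by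
      have : Fno.card = n.choose β - M := by omega
      omega
    have hnd : (0:ℝ) < (n:ℝ) - (d:ℝ) := by
      have : (d:ℝ) < (n:ℝ) := by exact_mod_cast hdn
      linarith
    have hnR : (0:ℝ) < (n:ℝ) := by exact_mod_cast hn0
    have hMCn : ((M:ℝ)) / (n.choose β : ℝ) = (β:ℝ) / (n:ℝ) := by
      rw [div_eq_div_iff (ne_of_gt hCR) (ne_of_gt hnR)]
      have : (n:ℝ) * (M:ℝ) = (n.choose β : ℝ) * (β:ℝ) := by exact_mod_cast hident
      linarith
    have hcomp : ((β:ℝ) - 1) / ((n:ℝ) - (d:ℝ)) ≤ (β:ℝ) / (n:ℝ) := by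
      rw [div_le_div_iff₀ hnd hnR]
      have h1 : (β:ℝ) * d < n := by exact_mod_cast hbdn
      have h2 : (1:ℝ) ≤ (β:ℝ) := by exact_mod_cast hβ1
      nlinarith
    have hcast : ((Ni.card : ℝ)) ≤ (Nj.card : ℝ) + ((n.choose β : ℝ) - (M:ℝ)) := by
      have := hnat
      have hsub : ((n.choose β - M : ℕ) : ℝ) = (n.choose β : ℝ) - (M:ℝ) :=
        Nat.cast_sub hMle
      calc ((Ni.card : ℝ)) ≤ ((Nj.card + (n.choose β - M) : ℕ) : ℝ) := by
            exact_mod_cast this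
        _ = (Nj.card : ℝ) + ((n.choose β : ℝ) - (M:ℝ)) := by
            push_cast [Nat.cast_sub hMle]; ring
    have hfin : ((Nj.card : ℝ) + ((n.choose β : ℝ) - (M:ℝ))) / (n.choose β : ℝ)
        = (Nj.card : ℝ) / (n.choose β : ℝ) + 1 - (M:ℝ) / (n.choose β : ℝ) := by
      field_simp
      ring
    have hdivle : (Ni.card : ℝ) / (n.choose β : ℝ)
        ≤ (Nj.card : ℝ) / (n.choose β : ℝ) + 1 - (M:ℝ) / (n.choose β : ℝ) := by
      rw [← hfin]
      gcongr
    calc (Ni.card : ℝ) / (n.choose β : ℝ)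
        ≤ (Nj.card : ℝ) / (n.choose β : ℝ) + 1 - (M:ℝ) / (n.choose β : ℝ) := hdivle
      _ = (Nj.card : ℝ) / (n.choose β : ℝ) + 1 - (β:ℝ) / (n:ℝ) := by rw [hMCn]
      _ ≤ (Nj.card : ℝ) / (n.choose β : ℝ) + (1 - ((β:ℝ) - 1) / ((n:ℝ) - (d:ℝ))) := by
          linarith
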